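/- For m ≥ 2, the lifted code S_{(q,m)}(q|q²) is a projective two-weight code with weight enumerator 1 + (q+1)(q^m−1) z^{q^{m−1}} + (q^m−q)(q^m−1) z^{q^{m−1}+q^{m−2}}. -/

import Mathlib

open Finset

/-- Hamming weight of a vector. -/
noncomputable def wt {ι R : Type*} [Fintype ι] [Zero R] (c : ι → R) : ℕ :=
  Set.ncard {j | c j ≠ 0}

/-- The lifted code `C(q|q^ℓ)`: the `E`-span of (the image in `E^n` of) a code `C ⊆ F^n`. -/
noncomputable def liftCode (F : Type*) {ι : Type*} (E : Type*) [Field F] [Field E] [Algebra F E]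
    (C : Submodule F (ι → F)) : Submodule E (ι → E) :=
  Submodule.span E ((fun c : ι → F => fun j => algebraMap F E (c j)) '' (C : Set (ι → F)))

/-- `A_i(C)`: the number of codewords of Hamming weight `i`. -/
noncomputable def numWt {ι R : Type*} [Fintype ι] [Semiring R] (C : Submodule R (ι → R)) (i : ℕ) : ℕ :=
  Set.ncard {c : ι → R | c ∈ C ∧ wt c = i}

/-- The set of supports of weight-`i` codewords of `C` (without repetition). -/
def codeSupports {ι R : Type*} [Fintype ι] [Semiring R] (C : Submodule R (ι → R)) (i : ℕ) :
    Set (Set ι) :=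
  {s | ∃ c, c ∈ C ∧ wt c = i ∧ s = {j | c j ≠ 0}}

/-- `C` has minimum Hamming distance `d`. -/
def IsMinDist {ι R : Type*} [Fintype ι] [Semiring R] (C : Submodule R (ι → R)) (d : ℕ) : Prop :=
  (∃ c, c ∈ C ∧ c ≠ 0 ∧ wt c = d) ∧ ∀ c, c ∈ C → c ≠ 0 → d ≤ wt c

/-- The dual code under the standard bilinear form. -/
def dualCode {ι R : Type*} [Fintype ι] [CommRing R] (C : Submodule R (ι → R)) :
    Submodule R (ι → R) where
  carrier := {x | ∀ c ∈ C, ∑ j, x j * c j = 0}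
  add_mem' := by
    intro a b ha hb c hc
    simp only [Set.mem_setOf_eq] at *
    simp [Pi.add_apply, add_mul, Finset.sum_add_distrib, ha c hc, hb c hc]
  zero_mem' := by intro c hc; simp
  smul_mem' := by
    intro a x hx c hc
    simp only [Set.mem_setOf_eq] at *
    simp [Pi.smul_apply, smul_eq_mul, mul_assoc, ← Finset.mul_sum, hx c hc]

/-- Evaluation of multivariate polynomials over `GF(2)` as a linear map. -/
noncomputable def evalLM (m : ℕ) :
    MvPolynomial (Fin m) (ZMod 2) →ₗ[ZMod 2] ((Fin m → ZMod 2) → ZMod 2) where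
  toFun := fun p x => MvPolynomial.eval x p
  map_add' := by intro p q; funext x; simp
  map_smul' := by intro a p; funext x; simp

/-- The binary Reed-Muller code `RM₂(r,m)`: evaluations of polynomials of total degree `≤ r`. -/
noncomputable def RM (r m : ℕ) : Submodule (ZMod 2) ((Fin m → ZMod 2) → ZMod 2) :=
  Submodule.map (evalLM m) (MvPolynomial.restrictTotalDegree (Fin m) (ZMod 2) r)


lemma aux_card_eq_mul_of_fibers {α β : Type*} [DecidableEq β] (s : Finset α) (t : Finset β)
    (f : α → β) (hmem : ∀ a ∈ s, f a ∈ t) (k : ℕ)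
    (hfib : ∀ b ∈ t, (s.filter fun a => f a = b).card = k) : s.card = t.card * k := by
  classical
  rw [Finset.card_eq_sum_card_fiberwise hmem, Finset.sum_congr rfl hfib, Finset.sum_const,
    smul_eq_mul]

lemma aux_card_filter_and_ne_zero {α : Type*} [Fintype α] [DecidableEq α] [Zero α]
    (P : α → Prop) [DecidablePred P] (h0 : P 0) :
    (Finset.univ.filter fun x => P x ∧ x ≠ 0).card + 1 = (Finset.univ.filter P).card := by
  classical
  have h : (Finset.univ.filter P) = insert 0 (Finset.univ.filter fun x => P x ∧ x ≠ 0) := by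
    ext x
    by_cases hx : x = 0 <;> simp [hx, h0]
  rw [h, Finset.card_insert_of_notMem (by simp)]

lemma aux_wt_eq_card {ι R : Type*} [Fintype ι] [Zero R] (c : ι → R) [DecidablePred fun j => c j ≠ 0] :
    wt c = (Finset.univ.filter fun j => c j ≠ 0).card := by
  rw [wt, ← Set.ncard_coe_finset]
  congr 1
  ext j; simp

lemma aux_wt_eq_zero {ι R : Type*} [Fintype ι] [Zero R] (c : ι → R) :
    wt c = 0 ↔ c = 0 := by
  classical
  rw [aux_wt_eq_card, Finset.card_eq_zero, Finset.filter_eq_empty_iff]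
  constructor
  · intro h; funext j; have := h (Finset.mem_univ j); simpa using this
  · intro h j _; simp [h]

/-- for `m ≥ 2` the lifted Simplex code over `GF(q²)` is a projective
two-weight code with weight enumerator
`1 + (q+1)(q^m-1) z^{q^{m-1}} + (q^m-q)(q^m-1) z^{q^{m-1}+q^{m-2}}`. -/
theorem stmt12 {F E : Type*} [Field F] [Field E] [Algebra F E] [Fintype F] [Fintype E]
    {m n  : ℕ} (hm : 2 ≤ m) 
    (hE : Fintype.card E = Fintype.card F ^ 2)
    (g : Fin n → (Fin m → F)) (hg0 : ∀ i, g i ≠ 0)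
    (hg : ∀ v : Fin m → F, v ≠ 0 → ∃! i : Fin n, ∃ a : F, v = a • g i)
    (S : Submodule E (Fin n → E))
    (hS : S = Submodule.span E
      (Set.range fun i : Fin m => fun j : Fin n => algebraMap F E (g j i))) :
    (∀ j1 j2 : Fin n, j1 ≠ j2 → ∀ a : E,
      (fun i : Fin m => algebraMap F E (g j1 i)) ≠ a • fun i : Fin m => algebraMap F E (g j2 i)) ∧
    numWt S 0 = 1 ∧
    numWt S (Fintype.card F ^ (m - 1)) = (Fintype.card F + 1) * (Fintype.card F ^ m - 1) ∧
    numWt S (Fintype.card F ^ (m - 1) + Fintype.card F ^ (m - 2))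
      = (Fintype.card F ^ m - Fintype.card F) * (Fintype.card F ^ m - 1) ∧
    ∀ i, i ≠ 0 → i ≠ Fintype.card F ^ (m - 1) →
      i ≠ Fintype.card F ^ (m - 1) + Fintype.card F ^ (m - 2) → numWt S i = 0 := by
  classical
  set q := Fintype.card F with hq
  have hq2 : 2 ≤ q := Fintype.one_lt_card
  have hq1 : 0 < q - 1 := by omega
  have hinj : Function.Injective (algebraMap F E) := (algebraMap F E).injective
  -- rows and linear maps
  set Rw : Fin m → (Fin n → E) := fun i j => algebraMap F E (g j i) with hRw
  set L : (Fin m → E) →ₗ[E] (Fin n → E) := Fintype.linearCombination E Rw with hLdef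
  set φ : (Fin m → E) → ((Fin m → F) →ₗ[F] E) := fun v => Fintype.linearCombination F v with hφdef
  have hSrange : S = LinearMap.range L := by
    rw [hS, hLdef, Fintype.range_linearCombination]
  have hLφ : ∀ (v : Fin m → E) (j : Fin n), L v j = φ v (g j) := by
    intro v j
    simp [hLdef, hφdef, hRw, Fintype.linearCombination_apply, Finset.sum_apply, Pi.smul_apply,
      smul_eq_mul, Algebra.smul_def, mul_comm]
  have hφ0 : ∀ v : Fin m → E, (∀ j, φ v (g j) = 0) → v = 0 := by
    intro v h
    have hall : ∀ x : Fin m → F, φ v x = 0 := by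
      intro x
      by_cases hx : x = 0
      · simp [hx]
      · obtain ⟨i, a, hxa⟩ := (hg x hx).exists
        rw [hxa, map_smul, h i, smul_zero]
    funext i
    have h1 := hall (Pi.single i 1)
    simpa [hφdef, Fintype.linearCombination_apply, Pi.single_apply, ite_smul] using h1
  have hLinj : Function.Injective L :=
    (injective_iff_map_eq_zero L).mpr fun v hv => hφ0 v fun j => by rw [← hLφ v j, hv]; rfl
  have hL0 : ∀ v : Fin m → E, L v = 0 ↔ v = 0 := by
    intro v
    constructor
    · intro h; exact hLinj (by rw [h, map_zero])
    · intro h; rw [h, map_zero]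
  -- n is positive
  have hmpos : 0 < m := by omega
  have hn_pos : 0 < n := by
    have hx : (Pi.single (⟨0, hmpos⟩ : Fin m) (1 : F) : Fin m → F) ≠ 0 := by
      intro h
      have := congrFun h ⟨0, hmpos⟩
      simp at this
    obtain ⟨j, _⟩ := (hg _ hx).exists
    exact j.pos
  -- the index function
  set f : (Fin m → F) → Fin n := fun x =>
    if hx : x = 0 then ⟨0, hn_pos⟩ else (hg x hx).exists.choose with hfdef
  have hfspec : ∀ (x : Fin m → F) (hx : x ≠ 0), ∃ a : F, x = a • g (f x) := by
    intro x hx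
    rw [hfdef]
    simp only [dif_neg hx]
    exact (hg x hx).exists.choose_spec
  have hfuniq : ∀ (x : Fin m → F) (hx : x ≠ 0) (i : Fin n), (∃ a : F, x = a • g i) → f x = i := by
    intro x hx i hi
    exact (hg x hx).unique (hfspec x hx) hi
  -- counting points of PG(m-1,F) in a subspace
  have hNW : ∀ W : Submodule F (Fin m → F),
      (Finset.univ.filter fun j : Fin n => g j ∈ W).card * (q - 1)
        = q ^ (Module.finrank F W) - 1 := by
    intro W
    have hcardW : Fintype.card W = q ^ Module.finrank F W := Module.card_eq_pow_finrank
    have h1 : (Finset.univ.filter fun x : Fin m → F => x ∈ W ∧ x ≠ 0).card + 1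
        = q ^ Module.finrank F W := by
      rw [aux_card_filter_and_ne_zero (fun x => x ∈ W) W.zero_mem, ← hcardW,
        Fintype.card_subtype]
    have h2 : (Finset.univ.filter fun x : Fin m → F => x ∈ W ∧ x ≠ 0).card
        = (Finset.univ.filter fun j : Fin n => g j ∈ W).card * (q - 1) := by
      apply aux_card_eq_mul_of_fibers _ _ f
      · intro x hx
        simp only [Finset.mem_filter, Finset.mem_univ, true_and] at hx ⊢
        obtain ⟨hxW, hx0⟩ := hx
        obtain ⟨a, ha⟩ := hfspec x hx0
        have ha0 : a ≠ 0 := by rintro rfl; rw [zero_smul] at ha; exact hx0 ha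
        have h3 := W.smul_mem a⁻¹ hxW
        rw [ha, smul_smul, inv_mul_cancel₀ ha0, one_smul] at h3
        exact h3
      · intro j hj
        simp only [Finset.mem_filter, Finset.mem_univ, true_and] at hj
        have hbij := Finset.card_bij (s := Finset.univ.erase (0 : F))
          (t := (Finset.univ.filter fun x : Fin m → F => x ∈ W ∧ x ≠ 0).filter
            fun x => f x = j)
          (fun a _ => a • g j) ?_ ?_ ?_
        · rw [← hbij, Finset.card_erase_of_mem (Finset.mem_univ _), Finset.card_univ]
        · intro a ha
          have ha0 : a ≠ 0 := (Finset.mem_erase.mp ha).1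
          have hne : a • g j ≠ 0 := smul_ne_zero ha0 (hg0 j)
          simp only [Finset.mem_filter, Finset.mem_univ, true_and]
          exact ⟨⟨W.smul_mem _ hj, hne⟩, hfuniq _ hne j ⟨a, rfl⟩⟩
        · intro a₁ _ a₂ _ hEq
          have hEq' : a₁ • g j = a₂ • g j := hEq
          have h0 : (a₁ - a₂) • g j = 0 := by rw [sub_smul, hEq', sub_self]
          rcases smul_eq_zero.mp h0 with h | h
          · exact sub_eq_zero.mp h
          · exact absurd h (hg0 j)
        · intro x hx
          simp only [Finset.mem_filter, Finset.mem_univ, true_and] at hx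
          obtain ⟨⟨hxW, hx0⟩, hfx⟩ := hx
          obtain ⟨a, ha⟩ := hfspec x hx0
          rw [hfx] at ha
          have ha0 : a ≠ 0 := by rintro rfl; rw [zero_smul] at ha; exact hx0 ha
          exact ⟨a, Finset.mem_erase.mpr ⟨ha0, Finset.mem_univ _⟩, ha.symm⟩
    omega
  -- n * (q-1) = q^m - 1
  have htop : n * (q - 1) = q ^ m - 1 := by
    have h := hNW ⊤
    rw [finrank_top, Module.finrank_pi, Fintype.card_fin] at h
    simpa using h
  -- the weight formula
  set d : (Fin m → E) → ℕ := fun v => Module.finrank F (Submodule.span F (Set.range v))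
    with hddef
  have hwt : ∀ v : Fin m → E, wt (L v) * (q - 1) = q ^ m - q ^ (m - d v) := by
    intro v
    have hker : Module.finrank F (LinearMap.ker (φ v)) = m - d v := by
      have h := LinearMap.finrank_range_add_finrank_ker (φ v)
      rw [Module.finrank_pi, Fintype.card_fin] at h
      have hrange : LinearMap.range (φ v) = Submodule.span F (Set.range v) := by
        rw [hφdef]; exact Fintype.range_linearCombination F v
      rw [hrange] at h
      have hd : d v = Module.finrank F (Submodule.span F (Set.range v)) := rfl
      omega
    have hwtc : wt (L v) = n -
        (Finset.univ.filter fun j : Fin n => g j ∈ LinearMap.ker (φ v)).card := by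
      rw [aux_wt_eq_card]
      have hsplit := Finset.card_filter_add_card_filter_not
        (s := Finset.univ) (p := fun j : Fin n => L v j ≠ 0)
      have hEq : (Finset.univ.filter fun j : Fin n => ¬ L v j ≠ 0)
          = (Finset.univ.filter fun j : Fin n => g j ∈ LinearMap.ker (φ v)) := by
        apply Finset.filter_congr
        intro j _
        simp [hLφ v j, LinearMap.mem_ker]
      rw [hEq] at hsplit
      rw [Finset.card_univ, Fintype.card_fin] at hsplit
      omega
    have hk := hNW (LinearMap.ker (φ v))
    rw [hker] at hk
    have hle2 : q ^ (m - d v) ≤ q ^ m := Nat.pow_le_pow_right (by omega) (by omega)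
    have hNle : (Finset.univ.filter fun j : Fin n => g j ∈ LinearMap.ker (φ v)).card ≤ n := by
      calc _ ≤ (Finset.univ : Finset (Fin n)).card := Finset.card_filter_le _ _
      _ = n := by rw [Finset.card_univ, Fintype.card_fin]
    rw [hwtc, Nat.sub_mul, htop, hk]
    have h1 : 1 ≤ q ^ (m - d v) := Nat.one_le_pow _ _ (by omega)
    omega
  -- d v = 0 iff v = 0, and d v ≤ 2
  have hfrE : Module.finrank F E = 2 := by
    have h : q ^ Module.finrank F E = q ^ 2 := by rw [← Module.card_eq_pow_finrank, hE]
    exact Nat.pow_right_injective hq2 h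
  have hd2 : ∀ v : Fin m → E, d v ≤ 2 := by
    intro v
    rw [← hfrE]
    exact Submodule.finrank_le _
  have hd0 : ∀ v : Fin m → E, d v = 0 ↔ v = 0 := by
    intro v
    rw [hddef]
    simp only []
    rw [Submodule.finrank_eq_zero, Submodule.span_eq_bot]
    constructor
    · intro h; funext i; exact h (v i) (Set.mem_range_self i)
    · rintro rfl x hx
      obtain ⟨i, rfl⟩ := hx
      rfl
  -- weight values by d
  have hw1 : ∀ v : Fin m → E, d v = 1 → wt (L v) = q ^ (m - 1) := by
    intro v hv
    have h := hwt v
    rw [hv] at h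
    have hqm : q ^ m = q ^ (m - 1) * q := by
      rw [← pow_succ]; congr 1; omega
    have heq : q ^ (m - 1) * (q - 1) = q ^ m - q ^ (m - 1) := by
      rw [Nat.mul_sub, mul_one, hqm]
    rw [heq.symm] at h
    exact Nat.eq_of_mul_eq_mul_right (by omega) h
  have hw2 : ∀ v : Fin m → E, d v = 2 → wt (L v) = q ^ (m - 1) + q ^ (m - 2) := by
    intro v hv
    have h := hwt v
    rw [hv] at h
    have hqm1 : q ^ (m - 1) = q ^ (m - 2) * q := by
      rw [← pow_succ]; congr 1; omega
    have hqm : q ^ m = q ^ (m - 2) * q * q := by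
      rw [← pow_succ, ← pow_succ]; congr 1; omega
    have heq : (q ^ (m - 1) + q ^ (m - 2)) * (q - 1) = q ^ m - q ^ (m - 2) := by
      rw [hqm1, hqm]
      have h3 : q ^ (m-2) ≤ q ^ (m-2) * q := Nat.le_mul_of_pos_right _ (by omega)
      have h4 : q ^ (m-2) * q ≤ q ^ (m-2) * q * q := Nat.le_mul_of_pos_right _ (by omega)
      have e1 : (q ^ (m-2) * q + q ^ (m-2)) * (q - 1)
          = (q ^ (m-2) * q + q ^ (m-2)) * q - (q ^ (m-2) * q + q ^ (m-2)) := by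
        rw [Nat.mul_sub, mul_one]
      have e2 : (q ^ (m-2) * q + q ^ (m-2)) * q = q ^ (m-2) * q * q + q ^ (m-2) * q := by ring
      rw [e1, e2]
      omega
    rw [heq.symm] at h
    exact Nat.eq_of_mul_eq_mul_right (by omega) h
  have hw0 : wt (L 0) = 0 := by
    rw [map_zero]
    exact (aux_wt_eq_zero _).mpr rfl
  -- counting submodules of E of rank 1
  have hfinSub : Finite (Submodule F E) :=
    Finite.of_injective (fun W : Submodule F E => (W : Set E)) SetLike.coe_injective
  letI : Fintype (Submodule F E) := Fintype.ofFinite _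
  set t : Finset (Submodule F E) := Finset.univ.filter (fun W => Module.finrank F W = 1)
    with htdef
  have hWcard : ∀ W : Submodule F E, W ∈ t → Fintype.card W = q := by
    intro W hW
    rw [htdef] at hW
    simp only [Finset.mem_filter, Finset.mem_univ, true_and] at hW
    rw [Module.card_eq_pow_finrank (K := F) (V := W), hW, pow_one]
  have hlines : t.card * (q - 1) = q ^ 2 - 1 := by
    have hcount : (Finset.univ.filter fun e : E => e ≠ 0).card = t.card * (q - 1) := by
      apply aux_card_eq_mul_of_fibers _ _ (fun e => Submodule.span F {e})
      · intro e he
        simp only [Finset.mem_filter, Finset.mem_univ, true_and] at he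
        rw [htdef]
        simp only [Finset.mem_filter, Finset.mem_univ, true_and]
        exact finrank_span_singleton he
      · intro W hW
        have hW1 : Module.finrank F W = 1 := by
          rw [htdef] at hW
          simpa using hW
        have hEqset : ((Finset.univ.filter fun e : E => e ≠ 0).filter
            fun e => Submodule.span F {e} = W)
            = Finset.univ.filter (fun e : E => e ∈ W ∧ e ≠ 0) := by
          ext e
          simp only [Finset.mem_filter, Finset.mem_univ, true_and]
          constructor
          · rintro ⟨he0, hsp⟩
            exact ⟨hsp ▸ Submodule.subset_span rfl, he0⟩
          · rintro ⟨heW, he0⟩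
            refine ⟨he0, ?_⟩
            apply Submodule.eq_of_le_of_finrank_le
            · rw [Submodule.span_le, Set.singleton_subset_iff]; exact heW
            · have h6 := finrank_span_singleton (K := F) he0
              omega
        rw [hEqset]
        have h2 : (Finset.univ.filter (fun e : E => e ∈ W ∧ e ≠ 0)).card + 1
            = (Finset.univ.filter (fun e : E => e ∈ W)).card :=
          aux_card_filter_and_ne_zero (fun e : E => e ∈ W) W.zero_mem
        have h3 : (Finset.univ.filter (fun e : E => e ∈ W)).card = Fintype.card W := by
          rw [← Fintype.card_subtype]
        have h4 := hWcard W hW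
        omega
    have hLHS : (Finset.univ.filter fun e : E => e ≠ 0).card = q ^ 2 - 1 := by
      rw [Finset.filter_ne', Finset.card_erase_of_mem (Finset.mem_univ _), Finset.card_univ, hE]
    omega
  have htcard : t.card = q + 1 := by
    have h : (q + 1) * (q - 1) = q ^ 2 - 1 := by
      have e1 : (q+1) * (q-1) = (q+1)*q - (q+1) := by rw [Nat.mul_sub, mul_one]
      have e2 : (q+1)*q = q^2 + q := by ring
      rw [e1, e2]
      omega
    rw [← h] at hlines
    exact Nat.eq_of_mul_eq_mul_right (by omega) hlines
  -- the fibers of d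
  have hs0 : (Finset.univ.filter fun v : Fin m → E => d v = 0).card = 1 := by
    have h : (Finset.univ.filter fun v : Fin m → E => d v = 0) = {0} := by
      ext v
      simp only [Finset.mem_filter, Finset.mem_univ, true_and, Finset.mem_singleton]
      exact hd0 v
    rw [h, Finset.card_singleton]
  have hs1 : (Finset.univ.filter fun v : Fin m → E => d v = 1).card
      = (q + 1) * (q ^ m - 1) := by
    rw [← htcard]
    apply aux_card_eq_mul_of_fibers _ t (fun v => Submodule.span F (Set.range v))
    · intro v hv
      simp only [Finset.mem_filter, Finset.mem_univ, true_and] at hv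
      rw [htdef]
      simp only [Finset.mem_filter, Finset.mem_univ, true_and]
      exact hv
    · intro W hW
      have hW1 : Module.finrank F W = 1 := by
        rw [htdef] at hW
        simpa using hW
      have hEqset : ((Finset.univ.filter fun v : Fin m → E => d v = 1).filter
          fun v => Submodule.span F (Set.range v) = W)
          = Finset.univ.filter (fun v : Fin m → E => (∀ i, v i ∈ W) ∧ v ≠ 0) := by
        ext v
        simp only [Finset.mem_filter, Finset.mem_univ, true_and]
        constructor
        · rintro ⟨hd1, hsp⟩
          constructor
          · intro i
            exact hsp ▸ Submodule.subset_span (Set.mem_range_self i)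
          · intro h0
            rw [(hd0 v).mpr h0] at hd1
            omega
        · rintro ⟨hvW, hv0⟩
          have hle : Submodule.span F (Set.range v) ≤ W := by
            rw [Submodule.span_le]
            rintro x ⟨i, rfl⟩
            exact hvW i
          have hd1 : d v = 1 := by
            have hge : 1 ≤ d v := by
              have h5 : d v ≠ 0 := fun h => hv0 ((hd0 v).mp h)
              omega
            have hlef : d v ≤ Module.finrank F W := Submodule.finrank_mono hle
            omega
          refine ⟨hd1, ?_⟩
          apply Submodule.eq_of_le_of_finrank_le hle
          rw [hW1]
          exact hd1.ge
      rw [hEqset]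
      have h2 : (Finset.univ.filter (fun v : Fin m → E => (∀ i, v i ∈ W) ∧ v ≠ 0)).card + 1
          = (Finset.univ.filter (fun v : Fin m → E => ∀ i, v i ∈ W)).card :=
        aux_card_filter_and_ne_zero (fun v : Fin m → E => ∀ i, v i ∈ W)
          (fun i => W.zero_mem)
      have h3 : (Finset.univ.filter fun v : Fin m → E => ∀ i, v i ∈ W).card = q ^ m := by
        have e : {v : Fin m → E // ∀ i, v i ∈ W} ≃ (Fin m → W) :=
          { toFun := fun v i => ⟨v.1 i, v.2 i⟩
            invFun := fun w => ⟨fun i => (w i : E), fun i => (w i).2⟩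
            left_inv := fun v => rfl
            right_inv := fun w => rfl }
        have hc1 : (Finset.univ.filter fun v : Fin m → E => ∀ i, v i ∈ W).card
            = Fintype.card {v : Fin m → E // ∀ i, v i ∈ W} := (Fintype.card_subtype _).symm
        have hc2 : Fintype.card {v : Fin m → E // ∀ i, v i ∈ W} = Fintype.card (Fin m → W) :=
          Fintype.card_congr e
        have hc3 : Fintype.card (Fin m → W) = Fintype.card W ^ m := by
          rw [Fintype.card_fun, Fintype.card_fin]
        rw [hc1, hc2, hc3, hWcard W hW]
      rw [h3] at h2
      exact Nat.eq_sub_of_add_eq h2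
  have hs2 : (Finset.univ.filter fun v : Fin m → E => d v = 2).card
      = (q ^ m - q) * (q ^ m - 1) := by
    have hmem3 : ∀ v : Fin m → E, v ∈ (Finset.univ : Finset (Fin m → E)) → d v ∈ Finset.range 3 :=
      fun v _ => Finset.mem_range.mpr (by have := hd2 v; omega)
    have hpart := Finset.card_eq_sum_card_fiberwise hmem3
    rw [Finset.sum_range_succ, Finset.sum_range_succ, Finset.sum_range_one] at hpart
    rw [hs0, hs1] at hpart
    rw [Finset.card_univ, Fintype.card_fun, hE, Fintype.card_fin] at hpart
    have hsq : (q ^ 2) ^ m = q ^ m * q ^ m := by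
      rw [← pow_mul, two_mul, pow_add]
    rw [hsq] at hpart
    have h1m : 1 ≤ q ^ m := Nat.one_le_pow _ _ (by omega)
    have hqm : q ≤ q ^ m := Nat.le_self_pow (by omega) q
    zify [h1m, hqm] at hpart ⊢
    linear_combination -hpart
  -- numWt via the injective parametrization L
  have hset : ∀ i : ℕ, {c : Fin n → E | c ∈ S ∧ wt c = i}
      = L '' {v : Fin m → E | wt (L v) = i} := by
    intro i
    ext c
    constructor
    · rintro ⟨hc, hwc⟩
      rw [hSrange] at hc
      obtain ⟨v, rfl⟩ := LinearMap.mem_range.mp hc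
      exact ⟨v, hwc, rfl⟩
    · rintro ⟨v, hv, rfl⟩
      exact ⟨hSrange ▸ LinearMap.mem_range.mpr ⟨v, rfl⟩, hv⟩
  have hnum : ∀ i : ℕ, numWt S i
      = (Finset.univ.filter fun v : Fin m → E => wt (L v) = i).card := by
    intro i
    rw [numWt, hset i, Set.ncard_image_of_injective _ hLinj, ← Set.ncard_coe_finset]
    congr 1
    ext v
    simp
  have hw1pos : 0 < q ^ (m - 1) := Nat.pow_pos (by omega)
  have hw2pos : 0 < q ^ (m - 2) := Nat.pow_pos (by omega)
  have hwt0 : ∀ v : Fin m → E, wt (L v) = 0 ↔ v = 0 := by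
    intro v
    rw [aux_wt_eq_zero]
    exact hL0 v
  have htri : ∀ v : Fin m → E, wt (L v) = 0 ∨ wt (L v) = q ^ (m - 1)
      ∨ wt (L v) = q ^ (m - 1) + q ^ (m - 2) := by
    intro v
    have h2 := hd2 v
    interval_cases h : d v
    · left
      exact (hwt0 v).mpr ((hd0 v).mp h)
    · right; left; exact hw1 v h
    · right; right; exact hw2 v h
  refine ⟨?_, ?_, ?_, ?_, ?_⟩
  · -- projective
    intro j1 j2 hj a hcol
    obtain ⟨i0, hi0⟩ := Function.ne_iff.mp (hg0 j2)
    have hi0' : g j2 i0 ≠ 0 := by simpa using hi0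
    have hz : (algebraMap F E) (g j2 i0) ≠ 0 := by
      simp only [ne_eq, map_eq_zero]
      exact hi0'
    have h := congrFun hcol i0
    rw [Pi.smul_apply, smul_eq_mul] at h
    set b : F := g j1 i0 / g j2 i0 with hbdef
    have hab : a = algebraMap F E b := by
      rw [hbdef, map_div₀]
      field_simp
      rw [← h]
    have hcols : g j1 = b • g j2 := by
      funext i
      apply hinj
      have hi := congrFun hcol i
      rw [Pi.smul_apply, smul_eq_mul, hab] at hi
      rw [Pi.smul_apply, smul_eq_mul, map_mul]
      exact hi
    have huniq := (hg (g j1) (hg0 j1)).unique (y₁ := j1) (y₂ := j2)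
      ⟨1, (one_smul F (g j1)).symm⟩ ⟨b, hcols⟩
    exact hj huniq
  · -- numWt 0 = 1
    rw [hnum 0]
    have h : (Finset.univ.filter fun v : Fin m → E => wt (L v) = 0) = {0} := by
      ext v
      simp only [Finset.mem_filter, Finset.mem_univ, true_and, Finset.mem_singleton]
      exact hwt0 v
    rw [h, Finset.card_singleton]
  · -- numWt q^(m-1)
    rw [hnum]
    have h : (Finset.univ.filter fun v : Fin m → E => wt (L v) = q ^ (m - 1))
        = (Finset.univ.filter fun v : Fin m → E => d v = 1) := by
      ext v
      simp only [Finset.mem_filter, Finset.mem_univ, true_and]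
      constructor
      · intro hv
        rcases htri v with h0 | h1 | h2
        · rw [hv] at h0; omega
        · have h2 := hd2 v
          by_contra hne
          interval_cases h : d v
          · rw [(hwt0 v).mpr ((hd0 v).mp h)] at hv; omega
          · exact hne rfl
          · rw [hw2 v h] at hv; omega
        · rw [hv] at h2; omega
      · exact hw1 v
    rw [h, hs1]
  · -- numWt q^(m-1)+q^(m-2)
    rw [hnum]
    have h : (Finset.univ.filter
          fun v : Fin m → E => wt (L v) = q ^ (m - 1) + q ^ (m - 2))
        = (Finset.univ.filter fun v : Fin m → E => d v = 2) := by
      ext v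
      simp only [Finset.mem_filter, Finset.mem_univ, true_and]
      constructor
      · intro hv
        have h2 := hd2 v
        by_contra hne
        interval_cases h : d v
        · rw [(hwt0 v).mpr ((hd0 v).mp h)] at hv; omega
        · rw [hw1 v h] at hv; omega
        · exact hne rfl
      · exact hw2 v
    rw [h, hs2]
  · -- other weights
    intro i hi0 hi1 hi2
    rw [hnum]
    rw [Finset.card_eq_zero, Finset.filter_eq_empty_iff]
    intro v _
    rcases htri v with h | h | h
    · rw [h]; exact fun hc => hi0 hc.symm
    · rw [h]; exact fun hc => hi1 hc.symm
    · rw [h]; exact fun hc => hi2 hc.symm
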